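/- In any algebra (P, ·, ∘) satisfying the laws Σ, define r <_L s iff s = r·a₀·...·a_{n-1}·a_n or s = r·a₀·...·a_{n-1} ∘ a_n for some n ≥ 0 (left association, with the last operation possibly ∘). Then for all p, r, s ∈ P: if r <_L s then p·r <_L p∘r and p∘r <_L p·s. -/
import Mathlib


/-- r <_L s in an algebra with · and ∘ : s is a left-associated product
r·a₀·...·a_{n-1} ∗ a_n where ∗ ∈ {·, ∘} and all other operations are ·. -/
def ltLP {P : Type*} (mul comp : P → P → P) (r s : P) : Prop :=
  ∃ (l : List P) (a : P),
    s = mul (List.foldl mul r l) a ∨ s = comp (List.foldl mul r l) a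

/-- Theorem 1(i): in any algebra satisfying Σ, r <_L s implies p·r <_L p∘r and p∘r <_L p·s. -/
theorem ltLP_mul_comp {P : Type*} (mul comp : P → P → P)
    (hassoc : ∀ a b c, comp a (comp b c) = comp (comp a b) c)
    (hmix : ∀ a b c, mul (comp a b) c = mul a (mul b c))
    (hdist : ∀ a b c, mul a (comp b c) = comp (mul a b) (mul a c))
    (habs : ∀ a b, comp a b = comp (mul a b) a) :
    ∀ p r s : P, ltLP mul comp r s →
      ltLP mul comp (mul p r) (comp p r) ∧ ltLP mul comp (comp p r) (mul p s) := by
  intro p r s hrs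
  have key : ∀ (l : List P) (a : P), ∃ (M : List P) (c : P),
      mul p (mul (List.foldl mul r l) a) = mul (List.foldl mul (comp p r) M) c := by
    intro l
    induction l using List.reverseRecOn with
    | nil => intro a; exact ⟨[], a, (hmix p r a).symm⟩
    | append_singleton l₀ y ih =>
      intro a
      obtain ⟨M, c, hM⟩ := ih y
      refine ⟨M ++ [c], mul p a, ?_⟩
      rw [List.foldl_append, List.foldl_append]
      simp only [List.foldl]
      calc mul p (mul (mul (List.foldl mul r l₀) y) a)
          = mul (comp p (mul (List.foldl mul r l₀) y)) a := (hmix _ _ _).symm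
        _ = mul (comp (mul p (mul (List.foldl mul r l₀) y)) p) a := by rw [← habs]
        _ = mul (mul p (mul (List.foldl mul r l₀) y)) (mul p a) := hmix _ _ _
        _ = mul (mul (List.foldl mul (comp p r) M) c) (mul p a) := by rw [hM]
  constructor
  · exact ⟨[], p, Or.inr (habs p r)⟩
  · obtain ⟨l, a, h | h⟩ := hrs
    · obtain ⟨M, c, hM⟩ := key l a
      exact ⟨M, c, Or.inl (by rw [h, hM])⟩
    · obtain ⟨M, c, hM⟩ := key l a
      refine ⟨M ++ [c], mul p (List.foldl mul r l), Or.inr ?_⟩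
      rw [List.foldl_append]
      simp only [List.foldl]
      rw [← hM, h, habs (List.foldl mul r l) a, hdist]
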